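/- Let (Ω,T) be a subshift over a finite alphabet A with associated set of words W. Then (Ω,T) is minimal (every orbit {T^n ω : n ∈ ℤ} is dense in Ω) if and only if ν(v) > 0 for every nonempty v ∈ W. In particular, if (Ω,T) satisfies (PQ) (there is C > 0 with ν(v) ≥ C for all nonempty v ∈ W), then (Ω,T) is minimal. -/

import Mathlib

open Filter Topology

namespace SubshiftErgodic

variable {A : Type*}

/-- The shift map `T` on two-sided sequences over `A`: `(T ω) n = ω (n+1)`. -/
def shift (ω : ℤ → A) : ℤ → A := fun n => ω (n + 1)

/-- The `n`-th power of the shift: `(shiftZ n ω) k = ω (k + n)`. -/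
def shiftZ (n : ℤ) (ω : ℤ → A) : ℤ → A := fun k => ω (k + n)

/-- `Ω` is a subshift: a closed, shift-invariant subset of `A^ℤ`. -/
def IsSubshift [TopologicalSpace A] (Ω : Set (ℤ → A)) : Prop :=
  IsClosed Ω ∧ shift '' Ω = Ω

/-- Minimality: every orbit `{T^n ω : n ∈ ℤ}` is dense in `Ω`. -/
def IsMinimal [TopologicalSpace A] (Ω : Set (ℤ → A)) : Prop :=
  ∀ ω ∈ Ω, Ω ⊆ closure {ρ | ∃ n : ℤ, ρ = shiftZ n ω}

/-- The finite word `w` occurs in the sequence `ω` at position `k`. -/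
def OccursAt (w : List A) (ω : ℤ → A) (k : ℤ) : Prop :=
  ∀ i : Fin w.length, ω (k + (i : ℕ)) = w.get i

/-- The set `W = W(Ω)` of finite words occurring as factors of elements of `Ω`. -/
def words (Ω : Set (ℤ → A)) : Set (List A) :=
  {w | ∃ ω ∈ Ω, ∃ k : ℤ, OccursAt w ω k}

/-- `v` occurs as a factor of the finite word `w` at position `i`. -/
def OccursIn (v w : List A) (i : ℕ) : Prop :=
  i + v.length ≤ w.length ∧ v <+: w.drop i

/-- `♯_v(w)`: the number of occurrences of `v` as a factor of `w`. -/
noncomputable def occ (v w : List A) : ℕ :=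
  {i : ℕ | OccursIn v w i}.ncard

/-- `z` is a return word of `u` (relative to the set of words `W`). -/
def IsReturnWord (W : Set (List A)) (z u : List A) : Prop :=
  z ∈ W ∧ z ++ u ∈ W ∧ occ u (z ++ u) = 2 ∧ u <+: z ++ u

/-- The maximal number of pairwise disjoint occurrences of `v` as a factor of `w`. -/
noncomputable def maxDisjoint (v w : List A) : ℕ :=
  sSup {m : ℕ | ∃ s : Fin m → ℕ, (∀ i, OccursIn v w (s i)) ∧
    ∀ i j : Fin m, i < j → s i + v.length ≤ s j}

/-- The filter expressing `|w| → ∞` along words `w ∈ W`. -/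
def wordsFilter (W : Set (List A)) : Filter (List A) :=
  ⨅ L : ℕ, Filter.principal {w | w ∈ W ∧ L ≤ w.length}

/-- `lim_{|w| → ∞} g w = x` over `w ∈ W`: for every `ε > 0` there is `L` with
`‖g w - x‖ ≤ ε` for all `w ∈ W` with `|w| ≥ L`. -/
def TendstoWords {B : Type*} [SeminormedAddCommGroup B] (W : Set (List A))
    (g : List A → B) (x : B) : Prop :=
  ∀ ε : ℝ, 0 < ε → ∃ L : ℕ, ∀ w ∈ W, L ≤ w.length → ‖g w - x‖ ≤ ε

/-- `liminf_{|w| → ∞} g w` over `w ∈ W`, valued in the extended reals. -/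
noncomputable def liminfWords (W : Set (List A)) (g : List A → ℝ) : EReal :=
  Filter.liminf (fun w => (g w : EReal)) (wordsFilter W)

/-- `limsup_{|w| → ∞} g w` over `w ∈ W`, valued in the extended reals. -/
noncomputable def limsupWords (W : Set (List A)) (g : List A → ℝ) : EReal :=
  Filter.limsup (fun w => (g w : EReal)) (wordsFilter W)

/-- `ν(v) = liminf_{|w| → ∞} l_v(w)/|w|`, where
`l_v(w) = (max number of pairwise disjoint copies of v in w) ⬝ |v|`. -/
noncomputable def nu (W : Set (List A)) (v : List A) : EReal :=
  liminfWords W (fun w => ((maxDisjoint v w * v.length : ℕ) : ℝ) / (w.length : ℝ))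

/-- Condition (PQ): uniform positivity of quasiweights. -/
def PQ (W : Set (List A)) : Prop :=
  ∃ C : ℝ, 0 < C ∧ ∀ v ∈ W, v ≠ [] → (C : EReal) ≤ nu W v

/-- Unique ergodicity: all word frequencies `♯_v(w)/|w|` converge as `|w| → ∞`. -/
def UniquelyErgodic (Ω : Set (ℤ → A)) : Prop :=
  ∀ v ∈ words Ω, ∃ x : ℝ,
    TendstoWords (words Ω) (fun w => (occ v w : ℝ) / (w.length : ℝ)) x

/-- `F : W → ℝ` is subadditive. -/
def IsSubadditive (W : Set (List A)) (F : List A → ℝ) : Prop :=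
  ∀ a b : List A, a ∈ W → b ∈ W → a ++ b ∈ W → F (a ++ b) ≤ F a + F b

/-- `F^(n) = max { F v / |v| : v ∈ W, |v| = n }`. -/
noncomputable def wordSup (W : Set (List A)) (F : List A → ℝ) (n : ℕ) : ℝ :=
  sSup ((fun v => F v / (v.length : ℝ)) '' {v | v ∈ W ∧ v.length = n})

/-- Condition (SET): the uniform subadditive ergodic theorem holds, i.e. for every
subadditive `F` the limit `lim_{|w|→∞} F(w)/|w|` exists and equals `inf_{n ≥ 1} F^(n)`
(in the extended reals). -/
def SET (W : Set (List A)) : Prop :=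
  ∀ F : List A → ℝ, IsSubadditive W F →
    Filter.Tendsto (fun w => ((F w / (w.length : ℝ) : ℝ) : EReal)) (wordsFilter W)
      (nhds (⨅ n : {n : ℕ // 1 ≤ n}, ((wordSup W F n.1 : ℝ) : EReal)))

/-- A Banach-space-valued function `F : W → B` is additive. -/
def IsAdditive {B : Type*} [SeminormedAddCommGroup B] (W : Set (List A))
    (F : List A → B) : Prop :=
  ∃ D : ℝ, 0 < D ∧ ∃ c : ℕ → ℝ, Antitone c ∧ (∀ n, 0 ≤ c n) ∧
    Filter.Tendsto c Filter.atTop (nhds 0) ∧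
    (∀ vs : List (List A), (∀ v ∈ vs, v ∈ W) → vs.flatten ∈ W →
      ‖F vs.flatten - (vs.map F).sum‖ ≤ (vs.map fun v => c v.length * (v.length : ℝ)).sum) ∧
    ∀ v ∈ W, ‖F v‖ ≤ D * (v.length : ℝ)

/-- Condition (HP): powers in `W` have uniformly bounded exponent. -/
def HP (W : Set (List A)) : Prop :=
  ∃ N : ℕ, 0 < N ∧ ∀ v : List A, v ≠ [] → ∀ k : ℕ,
    (List.replicate k v).flatten ∈ W → k ≤ N

/-- Condition (PW): uniform positivity of weights. -/
def PW (W : Set (List A)) : Prop :=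
  ∃ E : ℝ, 0 < E ∧ ∀ v ∈ W, v ≠ [] →
    (E : EReal) ≤ liminfWords W (fun w => ((occ v w * v.length : ℕ) : ℝ) / (w.length : ℝ))

/-- Linear repetitivity. -/
def LinearlyRepetitive (W : Set (List A)) : Prop :=
  ∃ D : ℝ, 0 < D ∧ ∀ v ∈ W, v ≠ [] → ∀ w ∈ W, D * (v.length : ℝ) ≤ (w.length : ℝ) →
    v <:+: w

/-- Aperiodicity: no element of `Ω` is periodic. -/
def Aperiodic (Ω : Set (ℤ → A)) : Prop :=
  ∀ ω ∈ Ω, ∀ p : ℕ, 1 ≤ p → shiftZ (p : ℤ) ω ≠ ω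

/-- `m(n)`: the minimal length of a return word of a word of length `n` in `W`. -/
noncomputable def mRet (W : Set (List A)) (n : ℕ) : ℕ :=
  sInf {k : ℕ | ∃ v z : List A, v ∈ W ∧ v.length = n ∧ IsReturnWord W z v ∧ z.length = k}

/-- `k_ω^w`: the minimal nonnegative position at which `w` occurs in `ω`. -/
noncomputable def firstOcc (ω : ℤ → A) (w : List A) : ℕ :=
  sInf {k : ℕ | OccursAt w ω (k : ℤ)}

/-- `F_ω(w) = ∑_{j=0}^{|w|-1} f(T^{k_ω^w + j} ω)`. -/
noncomputable def birkhoffF {B : Type*} [AddCommMonoid B] (f : (ℤ → A) → B)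
    (ω : ℤ → A) (w : List A) : B :=
  ∑ j ∈ Finset.range w.length, f (shiftZ ((firstOcc ω w : ℤ) + (j : ℤ)) ω)



section Helpers

lemma shiftZ_mem [TopologicalSpace A] {Ω : Set (ℤ → A)} (hΩ : IsSubshift Ω)
    {ω : ℤ → A} (hω : ω ∈ Ω) (n : ℤ) : shiftZ n ω ∈ Ω := by
  induction n using Int.induction_on with
  | zero =>
    have : shiftZ 0 ω = ω := by funext k; simp [shiftZ]
    rwa [this]
  | succ n ih =>
    have : shiftZ (n + 1) ω = shift (shiftZ n ω) := by
      funext k; simp only [shiftZ, shift]; ring_nf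
    rw [this, ← hΩ.2]; exact Set.mem_image_of_mem _ ih
  | pred n ih =>
    have h2 : shiftZ (-n) ω ∈ shift '' Ω := by rw [hΩ.2]; exact ih
    obtain ⟨τ, hτ, hτ2⟩ := h2
    have : shiftZ (-n - 1) ω = τ := by
      funext k
      have h := congrFun hτ2 (k - 1)
      simp only [shift, shiftZ] at h ⊢
      have h3 : τ k = ω (k - 1 + -(n:ℤ)) := by simpa using h
      rw [h3]; congr 1; ring
    rwa [this]

lemma occursAt_of_occursIn {w v : List A} {ω : ℤ → A} {k : ℤ} {i : ℕ}
    (hw : OccursAt w ω k) (hv : OccursIn v w i) : OccursAt v ω (k + i) := by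
  intro j
  have hlen : i + (j : ℕ) < w.length := by
    have := hv.1; omega
  have h1 : v.get j = w.get ⟨i + j, hlen⟩ := by
    have hp := hv.2
    simpa [List.get_eq_getElem, List.getElem_drop] using
      (hp.getElem (i := (j : ℕ)) j.2)
  have h2 := hw ⟨i + j, hlen⟩
  rw [h1, ← h2]
  congr 1
  push_cast
  ring

lemma occursAt_ofFn (ρ : ℤ → A) (k : ℤ) (n : ℕ) :
    OccursAt (List.ofFn (fun j : Fin n => ρ (k + (j : ℕ)))) ρ k := by
  intro j
  simp [List.get_ofFn]

lemma mem_words_of_occursIn {Ω : Set (ℤ → A)} {w v : List A} {i : ℕ}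
    (hw : w ∈ words Ω) (hv : OccursIn v w i) : v ∈ words Ω := by
  obtain ⟨ω, hω, k, hk⟩ := hw
  exact ⟨ω, hω, k + i, occursAt_of_occursIn hk hv⟩

lemma eventually_wordsFilter {W : Set (List A)} {p : List A → Prop} :
    (∀ᶠ w in wordsFilter W, p w) ↔ ∃ L : ℕ, ∀ w ∈ W, L ≤ w.length → p w := by
  have hdir : Directed (· ≥ ·)
      (fun L : ℕ => Filter.principal {w : List A | w ∈ W ∧ L ≤ w.length}) := by
    intro L₁ L₂
    exact ⟨max L₁ L₂,
      Filter.principal_mono.2 (fun w hw => ⟨hw.1, le_trans (le_max_left _ _) hw.2⟩),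
      Filter.principal_mono.2 (fun w hw => ⟨hw.1, le_trans (le_max_right _ _) hw.2⟩)⟩
  constructor
  · intro h
    rw [Filter.eventually_iff, wordsFilter, Filter.mem_iInf_of_directed hdir] at h
    obtain ⟨L, hL⟩ := h
    exact ⟨L, fun w hw hlen => hL ⟨hw, hlen⟩⟩
  · rintro ⟨L, hL⟩
    rw [Filter.eventually_iff, wordsFilter, Filter.mem_iInf_of_directed hdir]
    exact ⟨L, fun w hw => hL w hw.1 hw.2⟩

lemma maxDisjoint_eq_zero {v w : List A} (h : ∀ i, ¬ OccursIn v w i) :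
    maxDisjoint v w = 0 := by
  have hset : {m : ℕ | ∃ s : Fin m → ℕ, (∀ i, OccursIn v w (s i)) ∧
      ∀ i j : Fin m, i < j → s i + v.length ≤ s j} = {0} := by
    ext m
    simp only [Set.mem_setOf_eq, Set.mem_singleton_iff]
    constructor
    · rintro ⟨s, hs, -⟩
      by_contra hm
      exact h (s ⟨0, Nat.pos_of_ne_zero hm⟩) (hs _)
    · rintro rfl
      exact ⟨Fin.elim0, fun i => i.elim0, fun i => i.elim0⟩
  rw [maxDisjoint, hset, csSup_singleton]

lemma le_maxDisjoint {v w : List A} (hv : v ≠ []) {m : ℕ} (s : Fin m → ℕ)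
    (hs : ∀ i, OccursIn v w (s i)) (hmono : ∀ i j : Fin m, i < j → s i + v.length ≤ s j) :
    m ≤ maxDisjoint v w := by
  have hvpos : 0 < v.length := List.length_pos_iff.2 hv
  have hbdd : BddAbove {m : ℕ | ∃ s : Fin m → ℕ, (∀ i, OccursIn v w (s i)) ∧
      ∀ i j : Fin m, i < j → s i + v.length ≤ s j} := by
    refine ⟨w.length, ?_⟩
    rintro n ⟨t, ht, htmono⟩
    have hsm : StrictMono (fun i : Fin n => (⟨t i, by
        have := (ht i).1; omega⟩ : Fin w.length)) := by
      intro i j hij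
      have := htmono i j hij
      simp only [Fin.mk_lt_mk]
      omega
    simpa using Fintype.card_le_of_injective _ hsm.injective
  exact le_csSup hbdd ⟨s, hs, hmono⟩

lemma le_nu {W : Set (List A)} {v : List A} {c : ℝ}
    (h : ∃ L : ℕ, ∀ w ∈ W, L ≤ w.length →
      c ≤ ((maxDisjoint v w * v.length : ℕ) : ℝ) / (w.length : ℝ)) :
    (c : EReal) ≤ nu W v := by
  rw [nu, liminfWords, Filter.liminf_eq]
  apply le_sSup
  rw [Set.mem_setOf_eq, eventually_wordsFilter]
  obtain ⟨L, hL⟩ := h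
  exact ⟨L, fun w hw hlen => by exact_mod_cast hL w hw hlen⟩

lemma nu_le_zero {W : Set (List A)} {v : List A}
    (h : ∀ L : ℕ, ∃ w ∈ W, L ≤ w.length ∧ maxDisjoint v w = 0) :
    nu W v ≤ 0 := by
  rw [nu, liminfWords, Filter.liminf_eq]
  apply sSup_le
  intro a ha
  rw [Set.mem_setOf_eq, eventually_wordsFilter] at ha
  obtain ⟨L, hL⟩ := ha
  obtain ⟨w, hw, hlen, hzero⟩ := h L
  have := hL w hw hlen
  rw [hzero] at this
  simpa using this

/-- If `ν(v) > 0` then `v` occurs somewhere in every element of `Ω`. -/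
lemma exists_occursAt_of_nu_pos [TopologicalSpace A] {Ω : Set (ℤ → A)}
    {ω : ℤ → A} (hω : ω ∈ Ω) {v : List A}
    (hnu : (0 : EReal) < nu (words Ω) v) : ∃ k : ℤ, OccursAt v ω k := by
  by_contra hcon
  push_neg at hcon
  have hle : nu (words Ω) v ≤ 0 := by
    apply nu_le_zero
    intro L
    refine ⟨List.ofFn (fun i : Fin L => ω i), ?_, by simp, ?_⟩
    · refine ⟨ω, hω, 0, ?_⟩
      intro i
      simp [List.get_ofFn]
    · apply maxDisjoint_eq_zero
      intro i hi
      have h0 : OccursAt (List.ofFn (fun i : Fin L => ω i)) ω 0 := by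
        intro j; simp [List.get_ofFn]
      have := occursAt_of_occursIn h0 hi
      exact hcon _ (by simpa using this)
  exact absurd (lt_of_lt_of_le hnu hle) (by simp)

/-- Bounded gaps: in a minimal subshift every word of `W` occurs in all
sufficiently long words of `W`. -/
lemma bounded_gaps [Fintype A] [TopologicalSpace A] [DiscreteTopology A]
    {Ω : Set (ℤ → A)} (hΩ : IsSubshift Ω) (hmin : IsMinimal Ω) {v : List A}
    (hvW : v ∈ words Ω) :
    ∃ R : ℕ, ∀ w ∈ words Ω, R ≤ w.length → ∃ i, OccursIn v w i := by
  by_contra hcon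
  push_neg at hcon
  set C : ℕ → Set (ℤ → A) :=
    fun R => {ω | ω ∈ Ω ∧ ∀ k : ℤ, k.natAbs ≤ R → ¬ OccursAt v ω k} with hC
  have hOccOpen : ∀ k : ℤ, IsOpen {ω : ℤ → A | OccursAt v ω k} := by
    intro k
    have : {ω : ℤ → A | OccursAt v ω k} =
        ⋂ j : Fin v.length, (fun ω : ℤ → A => ω (k + (j : ℕ))) ⁻¹' {v.get j} := by
      ext ω; simp [OccursAt, Set.mem_iInter]
    rw [this]
    exact isOpen_iInter_of_finite fun j =>
      (continuous_apply _).isOpen_preimage _ (isOpen_discrete _)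
  have hclosed : ∀ R, IsClosed (C R) := by
    intro R
    have : C R = Ω ∩ ⋂ k : ℤ, ⋂ (_ : k.natAbs ≤ R), {ω : ℤ → A | OccursAt v ω k}ᶜ := by
      ext ω; simp [hC, Set.mem_iInter]
    rw [this]
    exact hΩ.1.inter (isClosed_iInter fun k => isClosed_iInter fun _ =>
      (hOccOpen k).isClosed_compl)
  have hanti : ∀ R, C (R + 1) ⊆ C R := by
    intro R ω hω
    exact ⟨hω.1, fun k hk => hω.2 k (by omega)⟩
  have hne : ∀ R, (C R).Nonempty := by
    intro R
    obtain ⟨w, hwW, hwlen, hno⟩ := hcon (2 * R + v.length)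
    obtain ⟨ω₀, hω₀, k₀, hk₀⟩ := hwW
    refine ⟨shiftZ (k₀ + R) ω₀, shiftZ_mem hΩ hω₀ _, ?_⟩
    intro k hkabs hocc
    have hkb : -(R:ℤ) ≤ k ∧ k ≤ R := by omega
    set i : ℕ := (R + k).toNat with hi
    have hiZ : (i : ℤ) = R + k := by omega
    apply hno i
    constructor
    · omega
    · rw [List.prefix_iff_eq_take]
      apply List.ext_getElem
      · simp; omega
      · intro j hj hj'
        have hjv : j < v.length := hj
        have hwj : i + j < w.length := by omega
        have e1 : (List.take v.length (List.drop i w))[j] = w[i + j] := by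
          rw [List.getElem_take, List.getElem_drop]
        rw [e1]
        have e2 := hk₀ ⟨i + j, hwj⟩
        have e3 := hocc ⟨j, hjv⟩
        simp only [List.get_eq_getElem, shiftZ] at e2 e3
        rw [← e2, ← e3]
        congr 1
        push_cast [hiZ]
        ring
  obtain ⟨ω', hω'⟩ := IsCompact.nonempty_iInter_of_sequence_nonempty_isCompact_isClosed
    C hanti hne ((hclosed 0).isCompact) hclosed
  have hω'Ω : ω' ∈ Ω := (Set.mem_iInter.1 hω' 0).1
  have hnever : ∀ k : ℤ, ¬ OccursAt v ω' k := by
    intro k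
    exact (Set.mem_iInter.1 hω' k.natAbs).2 k le_rfl
  obtain ⟨ω₀, hω₀, k₀, hk₀⟩ := hvW
  have hcl := hmin ω' hω'Ω hω₀
  rw [mem_closure_iff] at hcl
  obtain ⟨σ, hσU, n, rfl⟩ := hcl
    (⋂ j : Fin v.length, (fun σ : ℤ → A => σ (k₀ + (j : ℕ))) ⁻¹' {v.get j})
    (isOpen_iInter_of_finite fun j =>
      (continuous_apply _).isOpen_preimage _ (isOpen_discrete _))
    (by simp only [Set.mem_iInter, Set.mem_preimage, Set.mem_singleton_iff]
        exact fun j => hk₀ j)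
  apply hnever (k₀ + n)
  intro j
  have := Set.mem_iInter.1 hσU j
  simp only [Set.mem_preimage, Set.mem_singleton_iff, shiftZ] at this
  rw [← this]
  congr 1
  ring

/-- `ν(v) > 0` from bounded gaps. -/
lemma nu_pos_of_bounded_gaps [TopologicalSpace A] {Ω : Set (ℤ → A)}
    {v : List A} (hv : v ≠ []) {R : ℕ} (hR1 : 1 ≤ R)
    (hR : ∀ w ∈ words Ω, R ≤ w.length → ∃ i, OccursIn v w i) :
    (0 : EReal) < nu (words Ω) v := by
  have hvpos : 0 < v.length := List.length_pos_iff.2 hv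
  have key : ((1 / (2 * R) : ℝ) : EReal) ≤ nu (words Ω) v := by
    apply le_nu
    refine ⟨2 * R, ?_⟩
    intro w hw hlen
    set L := w.length with hL
    set m := L / R with hm
    have hblock : ∀ j : Fin m, ∃ i : ℕ, i + v.length ≤ R ∧ OccursIn v w ((j : ℕ) * R + i) := by
      intro j
      have hjm : (j : ℕ) < m := j.2
      have hjR : ((j : ℕ) + 1) * R ≤ L := by
        calc ((j : ℕ) + 1) * R ≤ (L / R) * R :=
              Nat.mul_le_mul_right R (by omega)
          _ ≤ L := Nat.div_mul_le_self L R
      have hexp : ((j : ℕ) + 1) * R = (j : ℕ) * R + R := by ring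
      set b := (w.drop ((j : ℕ) * R)).take R with hb
      have hblen : b.length = R := by
        simp only [hb, List.length_take, List.length_drop]
        omega
      have hbin : OccursIn b w ((j : ℕ) * R) := by
        constructor
        · rw [hblen]; omega
        · exact List.take_prefix _ _
      have hbW : b ∈ words Ω := mem_words_of_occursIn hw hbin
      obtain ⟨i, hi⟩ := hR b hbW (le_of_eq hblen.symm)
      have hiv : i + v.length ≤ R := by
        have := hi.1; omega
      refine ⟨i, hiv, ?_, ?_⟩
      · omega
      · have h1 : v <+: b.drop i := hi.2
        have h2 : b.drop i = (w.drop ((j : ℕ) * R + i)).take (R - i) := by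
          rw [hb, List.drop_take, ← List.drop_drop]
        have h3 : (w.drop ((j : ℕ) * R + i)).take (R - i) <+: w.drop ((j : ℕ) * R + i) :=
          List.take_prefix _ _
        exact (h2 ▸ h1).trans h3
    choose s hs1 hs2 using hblock
    have hmd : m ≤ maxDisjoint v w := by
      apply le_maxDisjoint hv (fun j => (j : ℕ) * R + s j) hs2
      intro i j hij
      have h1 := hs1 i
      have hij' : (i : ℕ) + 1 ≤ (j : ℕ) := hij
      have h2 : ((i : ℕ) + 1) * R ≤ (j : ℕ) * R := Nat.mul_le_mul_right R hij'
      have h3 : ((i : ℕ) + 1) * R = (i : ℕ) * R + R := by ring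
      omega
    -- numeric estimate
    have hL0 : 0 < L := by omega
    have hdm : L < m * R + R := by
      have h1 := Nat.div_add_mod L R
      have hmod : L % R < R := Nat.mod_lt _ (by omega)
      have hcomm : R * (L / R) = m * R := by rw [hm]; ring
      omega
    have h2mR : L ≤ 2 * (m * R) := by
      nlinarith
    have hL0' : (0 : ℝ) < (L : ℝ) := by exact_mod_cast hL0
    have hR0' : (0 : ℝ) < 2 * (R : ℝ) := by positivity
    rw [div_le_div_iff₀ hR0' hL0']
    have c1 : (m : ℝ) * (v.length : ℝ) ≤ ((maxDisjoint v w * v.length : ℕ) : ℝ) := by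
      push_cast
      have : (m : ℝ) ≤ (maxDisjoint v w : ℝ) := by exact_mod_cast hmd
      nlinarith [show (0:ℝ) ≤ (v.length : ℝ) by positivity]
    have c2 : (L : ℝ) ≤ 2 * ((m : ℝ) * (R : ℝ)) := by exact_mod_cast h2mR
    have c3 : (1 : ℝ) ≤ (v.length : ℝ) := by exact_mod_cast hvpos
    nlinarith [show (0:ℝ) ≤ (m:ℝ) by positivity, show (0:ℝ) ≤ (R:ℝ) by positivity]
  calc (0 : EReal) < ((1 / (2 * R) : ℝ) : EReal) := by
        apply EReal.coe_pos.2
        positivity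
    _ ≤ nu (words Ω) v := key

end Helpers

/-- a subshift is minimal iff `ν(v) > 0` for every nonempty `v ∈ W`;
in particular (PQ) implies minimality. -/
theorem minimal_iff_nu_pos
    {A : Type*} [Fintype A] [Nonempty A] [TopologicalSpace A] [DiscreteTopology A]
    (Ω : Set (ℤ → A)) (hΩ : IsSubshift Ω) :
    (IsMinimal Ω ↔ ∀ v ∈ words Ω, v ≠ [] → (0 : EReal) < nu (words Ω) v) ∧
      (PQ (words Ω) → IsMinimal Ω) := by
  have main : IsMinimal Ω ↔ ∀ v ∈ words Ω, v ≠ [] → (0 : EReal) < nu (words Ω) v := by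
    constructor
    · intro hmin v hvW hv
      obtain ⟨R, hR⟩ := bounded_gaps hΩ hmin hvW
      exact nu_pos_of_bounded_gaps hv (R := R + 1) (by omega)
        (fun w hw hlen => hR w hw (by omega))
    · intro hnu ω hω ρ hρ
      rw [mem_closure_iff]
      intro U hU hρU
      obtain ⟨I, u, hIu, hsub⟩ := isOpen_pi_iff.1 hU ρ hρU
      set N : ℕ := I.sup (fun i => i.natAbs) with hN
      set v : List A := List.ofFn (fun j : Fin (2 * N + 1) => ρ (-(N : ℤ) + (j : ℕ))) with hv
      have hvlen : v.length = 2 * N + 1 := by simp [hv]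
      have hvocc : OccursAt v ρ (-(N : ℤ)) := by
        rw [hv]
        exact occursAt_ofFn ρ (-(N : ℤ)) (2 * N + 1)
      have hvW : v ∈ words Ω := ⟨ρ, hρ, -(N : ℤ), hvocc⟩
      have hvne : v ≠ [] := by
        intro h
        rw [h] at hvlen
        simp at hvlen
      obtain ⟨k, hk⟩ := exists_occursAt_of_nu_pos hω (hnu v hvW hvne)
      refine ⟨shiftZ (k + N) ω, ?_, ⟨k + N, rfl⟩⟩
      apply hsub
      intro i hi
      have hiN : i.natAbs ≤ N := Finset.le_sup hi
      set j : ℕ := (i + N).toNat with hj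
      have hjZ : (j : ℤ) = i + N := by omega
      have hjlt : j < v.length := by rw [hvlen]; omega
      have e1 : ω (k + (j : ℕ)) = v.get ⟨j, hjlt⟩ := by simpa using hk ⟨j, hjlt⟩
      have e2 : ρ (-(N : ℤ) + (j : ℕ)) = v.get ⟨j, hjlt⟩ := by simpa using hvocc ⟨j, hjlt⟩
      have : shiftZ (k + N) ω i = ρ i := by
        simp only [shiftZ]
        have : ω (i + (k + N)) = ω (k + (j : ℕ)) := by congr 1; omega
        rw [this, e1, ← e2]
        congr 1
        omega
      rw [this]
      exact (hIu i hi).2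
  refine ⟨main, ?_⟩
  rintro ⟨c, hc, hcle⟩
  apply main.2
  intro v hvW hvne
  calc (0 : EReal) < (c : EReal) := EReal.coe_pos.2 hc
    _ ≤ nu (words Ω) v := hcle v hvW hvne


end SubshiftErgodic
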